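/- Let X be a finite list of vectors in a lattice Λ ≅ ℤ^s spanning ℝ^s. If x_0 is a regular point (i.e., for no λ ∈ Λ does x_0 + λ lie in a facet of any parallelepiped of the paving), then the translated zonotope B(X) − x_0 contains exactly δ(X) = Σ_{b∈B(X)} |det(b)| lattice points, given the paving of B(X) by parallelepipeds Π_λ(b) indexed by bases b extracted from X. -/

import Mathlib

open scoped Classical

/-- Real realization of an integral vector list. -/
def XRe {s : ℕ} {ι : Type*} (X : ι → (Fin s → ℤ)) (i : ι) : Fin s → ℝ :=
  fun j => (X i j : ℝ)

/-- `b` is a basis extracted from `X`. -/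
def IsBasisOf {s : ℕ} {ι : Type*} (X : ι → (Fin s → ℤ)) (b : Finset ι) : Prop :=
  LinearIndependent ℝ (fun i : ↥b => XRe X i) ∧ Submodule.span ℝ (XRe X '' ↑b) = ⊤

/-- `|det(b)| = [Λ : Λ_b]`, the index of the sublattice generated by `b`. -/
noncomputable def detIndex {s : ℕ} {ι : Type*} (X : ι → (Fin s → ℤ)) (b : Finset ι) : ℕ :=
  Nat.card ((Fin s → ℤ) ⧸ Submodule.span ℤ (X '' ↑b))

/-- The zonotope `B(X) = {Σ t_a a : 0 ≤ t_a ≤ 1}`. -/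
def Zono {s : ℕ} {ι : Type*} [Fintype ι] (X : ι → (Fin s → ℤ)) : Set (Fin s → ℝ) :=
  {x | ∃ t : ι → ℝ, (∀ i, t i ∈ Set.Icc (0 : ℝ) 1) ∧ x = ∑ i, t i • XRe X i}

/-- The parallelepiped `Π_λ(b) = {λ + Σ_{i∈b} t_i a_i : 0 ≤ t_i ≤ 1}`. -/
def Para {s : ℕ} {ι : Type*} (X : ι → (Fin s → ℤ)) (lam : Fin s → ℤ) (b : Finset ι) :
    Set (Fin s → ℝ) :=
  {x | ∃ t : ι → ℝ, (∀ i, t i ∈ Set.Icc (0 : ℝ) 1) ∧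
    x = (fun j => (lam j : ℝ)) + ∑ i ∈ b, t i • XRe X i}

section Aux

noncomputable section

def castLin (s : ℕ) : (Fin s → ℤ) →ₗ[ℤ] (Fin s → ℝ) where
  toFun z := fun j => (z j : ℝ)
  map_add' x y := by funext j; simp [Pi.add_apply]
  map_smul' c x := by funext j; push_cast; simp

lemma castLin_injective (s : ℕ) : Function.Injective (castLin s) := by
  intro x y h
  funext j
  have : ((x j : ℝ)) = (y j : ℝ) := congrFun h j
  exact_mod_cast this

variable {s : ℕ} {ι : Type*} (X : ι → (Fin s → ℤ))

def bBasis {b : Finset ι} (hb : IsBasisOf X b) : Module.Basis ↥b ℝ (Fin s → ℝ) :=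
  Module.Basis.mk hb.1 (by
    rw [show Set.range (fun i : ↥b => XRe X i) = XRe X '' ↑b from (Set.image_eq_range _ _).symm,
      hb.2])

lemma bBasis_apply {b : Finset ι} (hb : IsBasisOf X b) (i : ↥b) :
    bBasis X hb i = XRe X i := by
  simp [bBasis]

def gHom {b : Finset ι} (hb : IsBasisOf X b) (l : Fin s → ℤ) : (Fin s → ℝ) ≃ₜ (↥b → ℝ) :=
  (Homeomorph.addRight (-(fun j => (l j : ℝ)))).trans
    (bBasis X hb).equivFun.toContinuousLinearEquiv.toHomeomorph

lemma gHom_apply {b : Finset ι} (hb : IsBasisOf X b) (l : Fin s → ℤ) (x : Fin s → ℝ) (i : ↥b) :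
    gHom X hb l x i = (bBasis X hb).repr (x - fun j => (l j : ℝ)) i := by
  simp [gHom, Module.Basis.equivFun_apply, sub_eq_add_neg]

end

end Aux

section Aux2

noncomputable section

open Set

variable {s : ℕ} {ι : Type*} (X : ι → (Fin s → ℤ))

lemma para_eq_preimage {b : Finset ι} (hb : IsBasisOf X b) (l : Fin s → ℤ) :
    Para X l b = (gHom X hb l) ⁻¹' (Set.univ.pi fun _ : ↥b => Set.Icc (0:ℝ) 1) := by
  have hsum : ∀ t : ι → ℝ, (∑ i ∈ b, t i • XRe X i) = ∑ i : ↥b, t i • bBasis X hb i := by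
    intro t
    rw [← Finset.sum_coe_sort b (fun i => t i • XRe X i)]
    exact Finset.sum_congr rfl fun i _ => by rw [bBasis_apply]
  ext x
  constructor
  · rintro ⟨t, ht, rfl⟩
    intro i _
    have : ((fun j => (l j : ℝ)) + ∑ i ∈ b, t i • XRe X i) - (fun j => (l j : ℝ))
        = ∑ i : ↥b, t i • bBasis X hb i := by
      rw [add_sub_cancel_left, hsum]
    rw [gHom_apply, this,
      congrFun ((bBasis X hb).repr_sum_self (fun i : ↥b => t ↑i)) i]
    exact ht i
  · intro hx
    simp only [Set.mem_preimage, Set.mem_pi, Set.mem_univ, forall_true_left] at hx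
    refine ⟨fun i => if h : i ∈ b then (bBasis X hb).repr (x - fun j => (l j : ℝ)) ⟨i, h⟩ else 0,
      ?_, ?_⟩
    · intro i
      by_cases h : i ∈ b
      · simp only [dif_pos h]
        have := hx ⟨i, h⟩
        rwa [gHom_apply] at this
      · simp [dif_neg h]
    · have : (∑ i ∈ b, (fun i => if h : i ∈ b then (bBasis X hb).repr (x - fun j => (l j : ℝ)) ⟨i, h⟩ else 0) i • XRe X i)
          = ∑ i : ↥b, (bBasis X hb).repr (x - fun j => (l j : ℝ)) i • bBasis X hb i := by
        rw [← Finset.sum_coe_sort b]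
        refine Finset.sum_congr rfl fun i _ => ?_
        simp only [dif_pos i.2, Subtype.coe_eta, bBasis_apply]
      rw [this, Module.Basis.sum_repr]
      abel

lemma interior_para {b : Finset ι} (hb : IsBasisOf X b) (l : Fin s → ℤ) :
    interior (Para X l b) = (gHom X hb l) ⁻¹' (Set.univ.pi fun _ : ↥b => Set.Ioo (0:ℝ) 1) := by
  rw [para_eq_preimage X hb l, ← Homeomorph.preimage_interior,
    interior_pi_set Set.finite_univ]
  simp [interior_Icc]

lemma para_eq_closure {b : Finset ι} (hb : IsBasisOf X b) (l : Fin s → ℤ) :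
    Para X l b = closure (interior (Para X l b)) := by
  rw [interior_para X hb l, ← Homeomorph.preimage_closure, closure_pi_set,
    para_eq_preimage X hb l]
  congr! with x i
  simp [closure_Ioo (zero_ne_one (α := ℝ))]

lemma halfopen_eq_preimage {b : Finset ι} (hb : IsBasisOf X b) (l : Fin s → ℤ) :
    (gHom X hb l) ⁻¹' (Set.univ.pi fun _ : ↥b => Set.Ico (0:ℝ) 1)
      = {x | x - (fun j => (l j : ℝ)) ∈ ZSpan.fundamentalDomain (bBasis X hb)} := by
  ext x
  simp only [Set.mem_preimage, Set.mem_pi, Set.mem_univ, forall_true_left, Set.mem_setOf_eq,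
    ZSpan.mem_fundamentalDomain]
  constructor
  · intro h i; have := h i; rwa [gHom_apply] at this
  · intro h i; rw [gHom_apply]; exact h i

end

end Aux2

section Aux3

noncomputable section

open Set Submodule

variable {s : ℕ} {ι : Type*} (X : ι → (Fin s → ℤ))

lemma span_range_bBasis {b : Finset ι} (hb : IsBasisOf X b) :
    span ℤ (Set.range ⇑(bBasis X hb)) = Submodule.map (castLin s) (span ℤ (X '' ↑b)) := by
  have h1 : Set.range ⇑(bBasis X hb) = XRe X '' ↑b := by
    rw [show ⇑(bBasis X hb) = fun i : ↥b => XRe X ↑i from funext (bBasis_apply X hb)]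
    exact (Set.image_eq_range _ _).symm
  have h2 : XRe X '' ↑b = castLin s '' (X '' ↑b) := by
    rw [Set.image_image]
    rfl
  rw [h1, h2, Submodule.span_image]

lemma card_halfopen {b : Finset ι} (hb : IsBasisOf X b) (c : Fin s → ℝ) :
    Nat.card {z : Fin s → ℤ // castLin s z + c ∈ ZSpan.fundamentalDomain (bBasis X hb)}
      = detIndex X b := by
  set L := span ℤ (X '' ↑b) with hL
  refine Nat.card_congr (Equiv.ofBijective
    (fun z => (Submodule.Quotient.mk z.1 : (Fin s → ℤ) ⧸ L)) ⟨?_, ?_⟩)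
  · rintro ⟨z, hz⟩ ⟨z', hz'⟩ h
    simp only [Submodule.Quotient.eq] at h
    have hv : castLin s (z - z') ∈ span ℤ (Set.range ⇑(bBasis X hb)) := by
      rw [span_range_bBasis X hb]
      exact Submodule.mem_map_of_mem h
    obtain ⟨w, _, huniq⟩ := ZSpan.exist_unique_vadd_mem_fundamentalDomain (bBasis X hb)
      (castLin s z' + c)
    have h1 : (⟨castLin s (z - z'), hv⟩ : span ℤ (Set.range ⇑(bBasis X hb)))
        +ᵥ (castLin s z' + c) ∈ ZSpan.fundamentalDomain (bBasis X hb) := by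
      show castLin s (z - z') + (castLin s z' + c) ∈ _
      have heq : castLin s (z - z') + (castLin s z' + c) = castLin s z + c := by
        rw [map_sub]; abel
      rw [heq]; exact hz
    have h2 : (0 : span ℤ (Set.range ⇑(bBasis X hb)))
        +ᵥ (castLin s z' + c) ∈ ZSpan.fundamentalDomain (bBasis X hb) := by
      show (0 : Fin s → ℝ) + (castLin s z' + c) ∈ _
      rw [zero_add]; exact hz'
    have := (huniq _ h1).trans (huniq _ h2).symm
    have hzz : castLin s (z - z') = 0 := by
      simpa [Subtype.ext_iff] using this
    have := castLin_injective s (by rw [hzz, map_zero] : castLin s (z - z') = castLin s 0)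
    ext : 1
    exact sub_eq_zero.mp this
  · intro q
    obtain ⟨u, rfl⟩ := Submodule.Quotient.mk_surjective L q
    obtain ⟨v, hv, _⟩ := ZSpan.exist_unique_vadd_mem_fundamentalDomain (bBasis X hb)
      (castLin s u + c)
    have hv' : (v : Fin s → ℝ) ∈ Submodule.map (castLin s) L := by
      rw [← span_range_bBasis X hb]; exact v.2
    obtain ⟨m, hm, hmv⟩ := hv'
    refine ⟨⟨u + m, ?_⟩, ?_⟩
    · have : castLin s (u + m) + c = (v : Fin s → ℝ) + (castLin s u + c) := by
        rw [map_add, hmv]; abel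
      rw [this]
      exact hv
    · simp only [Submodule.Quotient.eq]
      simpa using hm

lemma finite_halfopen {b : Finset ι} (hb : IsBasisOf X b) (c : Fin s → ℝ) :
    {z : Fin s → ℤ | castLin s z + c ∈ ZSpan.fundamentalDomain (bBasis X hb)}.Finite := by
  obtain ⟨r, hr⟩ := isBounded_iff_forall_norm_le.mp
    (ZSpan.fundamentalDomain_isBounded (bBasis X hb))
  set M : ℤ := ⌈r + ‖c‖⌉ with hM
  apply Set.Finite.subset (Set.finite_Icc (fun _ : Fin s => -M) (fun _ => M))
  intro z hz
  have hnorm : ‖castLin s z‖ ≤ r + ‖c‖ := by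
    calc ‖castLin s z‖ = ‖(castLin s z + c) - c‖ := by rw [add_sub_cancel_right]
    _ ≤ ‖castLin s z + c‖ + ‖c‖ := norm_sub_le _ _
    _ ≤ r + ‖c‖ := by gcongr; exact hr _ hz
  constructor <;> intro j
  · have h1 : |(z j : ℝ)| ≤ r + ‖c‖ :=
      le_trans (norm_le_pi_norm (castLin s z) j) hnorm
    have : -((M : ℝ)) ≤ (z j : ℝ) := by
      have := (abs_le.mp h1).1
      have h2 : r + ‖c‖ ≤ (M : ℝ) := Int.le_ceil _
      linarith
    exact_mod_cast this
  · have h1 : |(z j : ℝ)| ≤ r + ‖c‖ :=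
      le_trans (norm_le_pi_norm (castLin s z) j) hnorm
    have : (z j : ℝ) ≤ (M : ℝ) := by
      have := (abs_le.mp h1).2
      have h2 : r + ‖c‖ ≤ (M : ℝ) := Int.le_ceil _
      linarith
    exact_mod_cast this

end

end Aux3

/-- given a paving of the zonotope `B(X)` by parallelepipeds
`Π_{λ(b)}(b)` indexed by the bases `b` extracted from `X`, and a regular point `x₀`
(i.e. all lattice points of `B(X) − x₀` lie in interiors of the translated
parallelepipeds), `B(X) − x₀` contains exactly `δ(X) = Σ_b |det b|` lattice points. -/
theorem lattice_points_of_shifted_zonotope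
    {s : ℕ} {ι : Type*} [Fintype ι] (X : ι → (Fin s → ℤ))
    (hX0 : ∀ i, X i ≠ 0)
    (hspan : Submodule.span ℝ (Set.range (XRe X)) = ⊤)
    (lam : Finset ι → (Fin s → ℤ))
    (hcover : Zono X = ⋃ b ∈ {b : Finset ι | IsBasisOf X b}, Para X (lam b) b)
    (hdisj : ∀ b b' : Finset ι, IsBasisOf X b → IsBasisOf X b' → b ≠ b' →
      interior (Para X (lam b) b) ∩ interior (Para X (lam b') b') = ∅)
    (x₀ : Fin s → ℝ)
    (hreg : ∀ z : Fin s → ℤ, ((fun j => (z j : ℝ)) + x₀) ∈ Zono X →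
      ∃ b : Finset ι, IsBasisOf X b ∧
        ((fun j => (z j : ℝ)) + x₀) ∈ interior (Para X (lam b) b)) :
    Nat.card {z : Fin s → ℤ // ((fun j => (z j : ℝ)) + x₀) ∈ Zono X} =
      ∑ b ∈ Finset.univ.powerset.filter (IsBasisOf X), detIndex X b := by
  classical
  have hcast : ∀ z : Fin s → ℤ, (fun j => (z j : ℝ)) = castLin s z := fun z => rfl
  set F := Finset.univ.powerset.filter (IsBasisOf X) with hF
  have hbF : ∀ b : Finset ι, b ∈ F ↔ IsBasisOf X b := by
    intro b; simp [hF]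
  -- the sets of lattice points in the interiors of the tiles
  set A : Finset ι → Set (Fin s → ℤ) := fun b =>
    if IsBasisOf X b then {z | castLin s z + x₀ ∈ interior (Para X (lam b) b)} else ∅
    with hA
  have hAmem : ∀ b, IsBasisOf X b → ∀ z : Fin s → ℤ,
      (z ∈ A b ↔ castLin s z + x₀ ∈ interior (Para X (lam b) b)) := by
    intro b hb z; rw [hA]; simp [if_pos hb]
  -- Para ⊆ Zono
  have hParaZono : ∀ b : Finset ι, IsBasisOf X b → Para X (lam b) b ⊆ Zono X := by
    intro b hb
    rw [hcover]
    exact Set.subset_biUnion_of_mem (u := fun b => Para X (lam b) b)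
      (show b ∈ {b : Finset ι | IsBasisOf X b} from hb)
  -- A b coincides with the lattice points of the half-open tile
  have hAeq : ∀ b (hb : IsBasisOf X b),
      A b = {z : Fin s → ℤ |
        castLin s z + (x₀ - fun j => ((lam b) j : ℝ)) ∈ ZSpan.fundamentalDomain (bBasis X hb)} := by
    intro b hb
    ext z
    have hxz : castLin s z + (x₀ - fun j => ((lam b) j : ℝ))
        = (castLin s z + x₀) - fun j => ((lam b) j : ℝ) := by abel
    rw [hAmem b hb z, Set.mem_setOf_eq, hxz]
    have hiff := Set.ext_iff.mp (halfopen_eq_preimage X hb (lam b)) (castLin s z + x₀)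
    simp only [Set.mem_setOf_eq] at hiff
    rw [← hiff]
    constructor
    · intro hzi
      rw [interior_para X hb (lam b)] at hzi
      intro i hi
      exact Set.Ioo_subset_Ico_self (hzi i hi)
    · intro hzi
      -- the point lies in the closed tile, hence in the zonotope
      have hxPara : (castLin s z + x₀) ∈ Para X (lam b) b := by
        rw [para_eq_preimage X hb (lam b)]
        intro i hi
        exact Set.Ico_subset_Icc_self (hzi i hi)
      have hxZ : ((fun j => (z j : ℝ)) + x₀) ∈ Zono X := by
        rw [hcast z]; exact hParaZono b hb hxPara
      obtain ⟨b', hb', hxint⟩ := hreg z hxZ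
      rw [hcast z] at hxint
      by_cases hbb : b' = b
      · subst hbb; exact hxint
      · exfalso
        have hclos : (castLin s z + x₀) ∈ closure (interior (Para X (lam b) b)) := by
          rw [← para_eq_closure X hb (lam b)]; exact hxPara
        obtain ⟨y, hy1, hy2⟩ := (mem_closure_iff.mp hclos) _
          isOpen_interior hxint
        have : y ∈ interior (Para X (lam b') b') ∩ interior (Para X (lam b) b) := ⟨hy1, hy2⟩
        rw [hdisj b' b hb' hb hbb] at this
        exact this
  -- every A b is finite
  have hAfin : ∀ b : Finset ι, (A b).Finite := by
    intro b
    by_cases hb : IsBasisOf X b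
    · rw [hAeq b hb]; exact finite_halfopen X hb _
    · rw [hA]; simp [if_neg hb]
  -- the covering of the lattice points of the zonotope
  have hTeq : ∀ z : Fin s → ℤ,
      (((fun j => (z j : ℝ)) + x₀) ∈ Zono X ↔ ∃ b ∈ F, z ∈ A b) := by
    intro z
    constructor
    · intro hz
      obtain ⟨b, hb, hzint⟩ := hreg z hz
      exact ⟨b, (hbF b).mpr hb, (hAmem b hb z).mpr (by rw [← hcast z]; exact hzint)⟩
    · rintro ⟨b, hbF', hzA⟩
      have hb := (hbF b).mp hbF'
      have := (hAmem b hb z).mp hzA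
      rw [hcast z]
      exact hParaZono b hb (interior_subset this)
  -- disjointness
  have hdisjA : ∀ b ∈ F, ∀ b' ∈ F, b ≠ b' →
      Disjoint ((hAfin b).toFinset) ((hAfin b').toFinset) := by
    intro b hb' b' hb'' hne
    rw [Finset.disjoint_left]
    intro z hz hz'
    rw [Set.Finite.mem_toFinset] at hz hz'
    have h1 := (hAmem b ((hbF b).mp hb') z).mp hz
    have h2 := (hAmem b' ((hbF b').mp hb'') z).mp hz'
    have : (castLin s z + x₀) ∈ interior (Para X (lam b) b) ∩ interior (Para X (lam b') b') :=
      ⟨h1, h2⟩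
    rw [hdisj b b' ((hbF b).mp hb') ((hbF b').mp hb'') hne] at this
    exact this
  -- the total set is finite
  have hTfin : {z : Fin s → ℤ | ((fun j => (z j : ℝ)) + x₀) ∈ Zono X}.Finite := by
    apply Set.Finite.subset (Set.Finite.biUnion (F : Finset (Finset ι)).finite_toSet
      (fun b _ => hAfin b))
    intro z hz
    obtain ⟨b, hb, hzA⟩ := (hTeq z).mp hz
    exact Set.mem_biUnion hb hzA
  -- now count
  have hcard1 : Nat.card {z : Fin s → ℤ // ((fun j => (z j : ℝ)) + x₀) ∈ Zono X}
      = {z : Fin s → ℤ | ((fun j => (z j : ℝ)) + x₀) ∈ Zono X}.ncard :=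
    Nat.card_coe_set_eq _
  rw [hcard1, Set.ncard_eq_toFinset_card _ hTfin]
  have hToF : hTfin.toFinset = F.biUnion (fun b => (hAfin b).toFinset) := by
    ext z
    rw [Set.Finite.mem_toFinset, Finset.mem_biUnion]
    rw [Set.mem_setOf_eq, hTeq z]
    simp [Set.Finite.mem_toFinset]
  rw [hToF, Finset.card_biUnion hdisjA]
  refine Finset.sum_congr rfl fun b hbmem => ?_
  have hb := (hbF b).mp hbmem
  rw [← Set.ncard_eq_toFinset_card _ (hAfin b), ← Nat.card_coe_set_eq, hAeq b hb]
  exact card_halfopen X hb _
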